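/- Let X be a Hilbert space and let E₊, E₋ : ℂ → B(X) be operator-valued functions satisfying: for all x ∈ ℝ, E₊(x)E₊(x)* = E₋(x)E₋(x)*, each value E₊(z), E₋(z) is a Fredholm operator of index 0, E₊ is invertible on ℂ₊ and E₋ is invertible on ℂ₋. Then for every x ∈ ℝ, E₊(x) is invertible if and only if E₋(x) is invertible. -/

import Mathlib

open ContinuousLinearMap

private lemma key_transfer
    {X : Type*} [NormedAddCommGroup X] [InnerProductSpace ℂ X] [CompleteSpace X]
    (A B : X →L[ℂ] X)
    (h : A ∘L ContinuousLinearMap.adjoint A = B ∘L ContinuousLinearMap.adjoint B)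
    (hfin : FiniteDimensional ℂ (LinearMap.ker (B : X →ₗ[ℂ] X)))
    (hrank : Module.finrank ℂ (LinearMap.ker (B : X →ₗ[ℂ] X)) =
      Module.finrank ℂ (LinearMap.ker (ContinuousLinearMap.adjoint B : X →ₗ[ℂ] X)))
    (hA : IsUnit A) : IsUnit B := by
  obtain ⟨u, hu⟩ := hA
  have hadj1 : ContinuousLinearMap.adjoint A ∘L ContinuousLinearMap.adjoint (↑u⁻¹ : X →L[ℂ] X) = 1 := by
    rw [← ContinuousLinearMap.adjoint_comp, ← hu]
    have : (↑u⁻¹ : X →L[ℂ] X) ∘L (↑u : X →L[ℂ] X) = 1 := u.inv_mul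
    rw [this]
    simp [ContinuousLinearMap.one_def, ContinuousLinearMap.adjoint_id]
  have hadj2 : ContinuousLinearMap.adjoint (↑u⁻¹ : X →L[ℂ] X) ∘L ContinuousLinearMap.adjoint A = 1 := by
    rw [← ContinuousLinearMap.adjoint_comp, ← hu]
    have : (↑u : X →L[ℂ] X) ∘L (↑u⁻¹ : X →L[ℂ] X) = 1 := u.mul_inv
    rw [this]
    simp [ContinuousLinearMap.one_def, ContinuousLinearMap.adjoint_id]
  have hU : IsUnit (B ∘L ContinuousLinearMap.adjoint B) := by
    rw [← h, ← hu]
    exact ⟨⟨(↑u : X →L[ℂ] X) ∘L ContinuousLinearMap.adjoint (↑u : X →L[ℂ] X),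
      ContinuousLinearMap.adjoint (↑u⁻¹ : X →L[ℂ] X) ∘L (↑u⁻¹ : X →L[ℂ] X), by
        show ((↑u : X →L[ℂ] X) ∘L ContinuousLinearMap.adjoint (↑u : X →L[ℂ] X)) ∘L
          (ContinuousLinearMap.adjoint (↑u⁻¹ : X →L[ℂ] X) ∘L (↑u⁻¹ : X →L[ℂ] X)) = 1
        rw [ContinuousLinearMap.comp_assoc, ← ContinuousLinearMap.comp_assoc
          (ContinuousLinearMap.adjoint (↑u : X →L[ℂ] X)), hu, hadj1]
        simp only [ContinuousLinearMap.one_def, ContinuousLinearMap.id_comp]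
        rw [← hu]
        exact u.mul_inv, by
        show (ContinuousLinearMap.adjoint (↑u⁻¹ : X →L[ℂ] X) ∘L (↑u⁻¹ : X →L[ℂ] X)) ∘L
          ((↑u : X →L[ℂ] X) ∘L ContinuousLinearMap.adjoint (↑u : X →L[ℂ] X)) = 1
        rw [ContinuousLinearMap.comp_assoc, ← ContinuousLinearMap.comp_assoc
          (↑u⁻¹ : X →L[ℂ] X)]
        have : (↑u⁻¹ : X →L[ℂ] X) ∘L (↑u : X →L[ℂ] X) = 1 := u.inv_mul
        rw [this]
        simp only [ContinuousLinearMap.one_def, ContinuousLinearMap.id_comp]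
        rw [hu]
        exact hadj2⟩, rfl⟩
  obtain ⟨w, hw⟩ := hU
  -- B* is injective
  have hkeradj : LinearMap.ker (ContinuousLinearMap.adjoint B : X →ₗ[ℂ] X) = ⊥ := by
    rw [LinearMap.ker_eq_bot']
    intro v hv
    have h1 : (B ∘L ContinuousLinearMap.adjoint B) v = 0 := by
      simp [ContinuousLinearMap.comp_apply, show ContinuousLinearMap.adjoint B v = 0 from hv]
    have h2 : ((↑w⁻¹ : X →L[ℂ] X) * ↑w) v = v := by rw [w.inv_mul]; rfl
    calc v = (↑w⁻¹ : X →L[ℂ] X) ((↑w : X →L[ℂ] X) v) := h2.symm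
      _ = (↑w⁻¹ : X →L[ℂ] X) ((B ∘L ContinuousLinearMap.adjoint B) v) := by rw [hw]
      _ = (↑w⁻¹ : X →L[ℂ] X) 0 := by rw [h1]
      _ = 0 := map_zero _
  have hkerB : LinearMap.ker (B : X →ₗ[ℂ] X) = ⊥ := by
    have : Module.finrank ℂ (LinearMap.ker (B : X →ₗ[ℂ] X)) = 0 := by
      rw [hrank, hkeradj]; exact finrank_bot ℂ X
    exact Submodule.finrank_eq_zero.mp this
  have hsurj : Function.Surjective B := by
    intro y
    have h2 : ((↑w : X →L[ℂ] X) * ↑w⁻¹) y = y := by rw [w.mul_inv]; rfl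
    refine ⟨ContinuousLinearMap.adjoint B ((↑w⁻¹ : X →L[ℂ] X) y), ?_⟩
    have h3 : (B ∘L ContinuousLinearMap.adjoint B) ((↑w⁻¹ : X →L[ℂ] X) y) = y := by
      rw [← hw]; exact h2
    simpa [ContinuousLinearMap.comp_apply] using h3
  let e := ContinuousLinearEquiv.ofBijective B hkerB (LinearMap.range_eq_top.mpr hsurj)
  refine ⟨⟨B, (e.symm : X →L[ℂ] X), ?_, ?_⟩, rfl⟩
  · ext v
    exact e.apply_symm_apply v
  · ext v
    exact e.symm_apply_apply v

theorem isUnit_Ep_iff_isUnit_Em_on_real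
    {X : Type*} [NormedAddCommGroup X] [InnerProductSpace ℂ X] [CompleteSpace X]
    (Ep Em : ℂ → (X →L[ℂ] X))
    -- `E₊(x)E₊(x)* = E₋(x)E₋(x)*` for all real `x`
    (hEq : ∀ x : ℝ, Ep (x : ℂ) ∘L ContinuousLinearMap.adjoint (Ep (x : ℂ)) =
      Em (x : ℂ) ∘L ContinuousLinearMap.adjoint (Em (x : ℂ)))
    -- each value is a Fredholm operator of index `0`
    (hFp : ∀ z : ℂ, FiniteDimensional ℂ (LinearMap.ker (Ep z : X →ₗ[ℂ] X)) ∧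
      FiniteDimensional ℂ (LinearMap.ker (ContinuousLinearMap.adjoint (Ep z) : X →ₗ[ℂ] X)))
    (hFm : ∀ z : ℂ, FiniteDimensional ℂ (LinearMap.ker (Em z : X →ₗ[ℂ] X)) ∧
      FiniteDimensional ℂ (LinearMap.ker (ContinuousLinearMap.adjoint (Em z) : X →ₗ[ℂ] X)))
    (hip : ∀ z : ℂ, Module.finrank ℂ (LinearMap.ker (Ep z : X →ₗ[ℂ] X)) =
      Module.finrank ℂ (LinearMap.ker (ContinuousLinearMap.adjoint (Ep z) : X →ₗ[ℂ] X)))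
    (him : ∀ z : ℂ, Module.finrank ℂ (LinearMap.ker (Em z : X →ₗ[ℂ] X)) =
      Module.finrank ℂ (LinearMap.ker (ContinuousLinearMap.adjoint (Em z) : X →ₗ[ℂ] X)))
    -- `E₊` is invertible on the open upper half-plane, `E₋` on the open lower half-plane
    (hEp_inv : ∀ z : ℂ, 0 < z.im → IsUnit (Ep z))
    (hEm_inv : ∀ z : ℂ, z.im < 0 → IsUnit (Em z)) :
    ∀ x : ℝ, IsUnit (Ep (x : ℂ)) ↔ IsUnit (Em (x : ℂ)) := by
  intro x
  constructor
  · intro h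
    exact key_transfer (Ep x) (Em x) (hEq x) (hFm x).1 (him x) h
  · intro h
    exact key_transfer (Em x) (Ep x) (hEq x).symm (hFp x).1 (hip x) h
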